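/- Let 1 < α < 2 and let a be the sequence a_n = |n|^α for n ∈ ℤ. Let b : ℤ → ℝ be a symmetric sequence (b_{-n} = b_n) satisfying ∑_{j≥1} j^α |b_j| < ∞. Then S_b := ∑_{j∈ℤ} b_j converges, the convolution c_n := ∑_{j∈ℤ} a_j b_{n-j} converges for every n ∈ ℤ, c is symmetric, and c_n − S_b·|n|^α → 0 as n → ∞. -/

import Mathlib

open Filter Real

lemma grad_lower {p : ℝ} (hp : 1 ≤ p) {x y : ℝ} (hx : 0 < x) (hy : 0 ≤ y) :
    x ^ p + p * x ^ (p - 1) * (y - x) ≤ y ^ p := by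
  have hs : -1 ≤ (y - x) / x := by
    rw [neg_le, ← neg_div, div_le_one hx]; linarith
  have h := one_add_mul_self_le_rpow_one_add hs hp
  have key : (1 : ℝ) + (y - x) / x = y / x := by field_simp; ring
  rw [key, Real.div_rpow hy hx.le] at h
  have hxp : (0:ℝ) < x ^ p := Real.rpow_pos_of_pos hx p
  have h2 := mul_le_mul_of_nonneg_right h hxp.le
  rw [div_mul_cancel₀ _ hxp.ne'] at h2
  have hx1 : x ^ (p - 1) = x ^ p / x := Real.rpow_sub_one hx.ne' p
  calc x ^ p + p * x ^ (p - 1) * (y - x) = (1 + p * ((y - x) / x)) * x ^ p := by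
        rw [hx1]; field_simp
    _ ≤ y ^ p := h2

lemma grad_upper {p : ℝ} (hp0 : 0 ≤ p) (hp : p ≤ 1) {x y : ℝ} (hx : 0 < x) (hy : 0 ≤ y) :
    y ^ p ≤ x ^ p + p * x ^ (p - 1) * (y - x) := by
  have hs : -1 ≤ (y - x) / x := by
    rw [neg_le, ← neg_div, div_le_one hx]; linarith
  have h := rpow_one_add_le_one_add_mul_self hs hp0 hp
  have key : (1 : ℝ) + (y - x) / x = y / x := by field_simp; ring
  rw [key, Real.div_rpow hy hx.le] at h
  have hxp : (0:ℝ) < x ^ p := Real.rpow_pos_of_pos hx p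
  have h2 := mul_le_mul_of_nonneg_right h hxp.le
  rw [div_mul_cancel₀ _ hxp.ne'] at h2
  have hx1 : x ^ (p - 1) = x ^ p / x := Real.rpow_sub_one hx.ne' p
  calc y ^ p ≤ (1 + p * ((y - x) / x)) * x ^ p := h2
    _ = x ^ p + p * x ^ (p - 1) * (y - x) := by rw [hx1]; field_simp

lemma rpow_subadd {p : ℝ} (hp0 : 0 ≤ p) (hp : p ≤ 1) {x y : ℝ} (hx : 0 ≤ x) (hy : 0 ≤ y) :
    (x + y) ^ p ≤ x ^ p + y ^ p := by
  have h := NNReal.rpow_add_le_add_rpow x.toNNReal y.toNNReal hp0 hp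
  have := NNReal.coe_le_coe.mpr h
  push_cast [NNReal.coe_rpow, Real.coe_toNNReal _ hx, Real.coe_toNNReal _ hy] at this
  convert this using 2

lemma key_nonneg {α : ℝ} (hα1 : 1 ≤ α) {m x : ℝ} (hm : 0 ≤ m) (hx : 0 ≤ x) :
    0 ≤ |m - x| ^ α + (m + x) ^ α - 2 * m ^ α := by
  rcases hm.eq_or_lt with rfl | hm'
  · simp only [zero_sub, abs_neg, abs_of_nonneg hx, zero_add]
    rw [Real.zero_rpow (by positivity)]
    nlinarith [Real.rpow_nonneg hx α]
  · have h1 := grad_lower hα1 hm' (abs_nonneg (m - x))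
    have h2 := grad_lower hα1 hm' (by linarith : (0:ℝ) ≤ m + x)
    have hc : 0 ≤ α * m ^ (α - 1) := by positivity
    have habs : 0 ≤ |m - x| - m + x := by
      have := le_abs_self (m - x); linarith
    nlinarith [mul_nonneg hc habs]

lemma key_upper {α : ℝ} (hα1 : 1 ≤ α) {m x : ℝ} (hx : 0 ≤ x) (hxm : x < m) :
    (m - x) ^ α + (m + x) ^ α - 2 * m ^ α
      ≤ α * x * ((m + x) ^ (α - 1) - (m - x) ^ (α - 1)) := by
  have hm : (0:ℝ) ≤ m := by linarith
  have h1 := grad_lower hα1 (by linarith : (0:ℝ) < m + x) hm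
  have h2 := grad_lower hα1 (by linarith : (0:ℝ) < m - x) hm
  nlinarith [h1, h2]

lemma key_bound {α : ℝ} (hα1 : 1 < α) (hα2 : α < 2) {m x : ℝ} (hm : 0 ≤ m) (hx : 0 ≤ x) :
    |(|m - x| ^ α + (m + x) ^ α - 2 * m ^ α)| ≤ (1 + 2 ^ α + α * 2 ^ α) * x ^ α := by
  rw [abs_of_nonneg (key_nonneg hα1.le hm hx)]
  rcases hx.eq_or_lt with rfl | hx'
  · simp only [sub_zero, add_zero, abs_of_nonneg hm]
    rw [Real.zero_rpow (by positivity)]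
    nlinarith []
  rcases le_or_gt m x with hmx | hxm
  · have e1 : |m - x| = x - m := by rw [abs_sub_comm, abs_of_nonneg (by linarith)]
    have b1 : (x - m) ^ α ≤ x ^ α := Real.rpow_le_rpow (by linarith) (by linarith) (by linarith)
    have b2 : (m + x) ^ α ≤ 2 ^ α * x ^ α := by
      rw [← Real.mul_rpow (by norm_num) hx'.le]
      exact Real.rpow_le_rpow (by linarith) (by linarith) (by linarith)
    have b3 : 0 ≤ m ^ α := Real.rpow_nonneg hm α
    have b4 : 0 ≤ α * 2 ^ α * x ^ α := by positivity
    rw [e1]; nlinarith [Real.rpow_nonneg hx'.le α]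
  · have e1 : |m - x| = m - x := abs_of_nonneg (by linarith)
    rw [e1]
    have h1 := key_upper hα1.le hx'.le hxm
    have h2 : (m + x) ^ (α - 1) ≤ (m - x) ^ (α - 1) + (2 * x) ^ (α - 1) := by
      have := rpow_subadd (by linarith : (0:ℝ) ≤ α - 1) (by linarith : α - 1 ≤ 1)
        (by linarith : (0:ℝ) ≤ m - x) (by linarith : (0:ℝ) ≤ 2 * x)
      convert this using 2; ring
    have e2 : x * (2 * x) ^ (α - 1) = 2 ^ (α - 1) * x ^ α := by
      have exa : x ^ α = x ^ (α - 1) * x := by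
        rw [← Real.rpow_add_one hx'.ne' (α - 1)]; norm_num
      rw [Real.mul_rpow (by norm_num) hx'.le, exa]; ring
    have h3 : (m - x) ^ α + (m + x) ^ α - 2 * m ^ α ≤ α * (2 ^ (α - 1) * x ^ α) := by
      have hax : 0 ≤ α * x := by positivity
      nlinarith [mul_le_mul_of_nonneg_left (sub_le_iff_le_add.mpr h2)
        (by positivity : (0:ℝ) ≤ α * x), e2]
    have h4 : (2:ℝ) ^ (α - 1) ≤ 2 ^ α :=
      Real.rpow_le_rpow_of_exponent_le (by norm_num) (by linarith)
    have b4 : 0 ≤ x ^ α := Real.rpow_nonneg hx'.le α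
    have hα0 : (0:ℝ) ≤ α := by linarith
    have A := mul_le_mul_of_nonneg_right (mul_le_mul_of_nonneg_left h4 hα0) b4
    have B : 0 ≤ (1 + 2 ^ α) * x ^ α := by positivity
    nlinarith [h3, A, B]

lemma key_tendsto {α : ℝ} (hα1 : 1 < α) (hα2 : α < 2) {x : ℝ} (hx : 0 ≤ x) :
    Tendsto (fun n : ℕ => |(n:ℝ) - x| ^ α + ((n:ℝ) + x) ^ α - 2 * (n:ℝ) ^ α)
      atTop (nhds 0) := by
  have hnx : Tendsto (fun n : ℕ => (n:ℝ) - x) atTop atTop := by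
    simpa [sub_eq_add_neg] using
      tendsto_atTop_add_const_right atTop (-x) tendsto_natCast_atTop_atTop
  have hh : Tendsto (fun n : ℕ => (2 * α * (α - 1) * x ^ 2) * ((n:ℝ) - x) ^ (α - 2))
      atTop (nhds 0) := by
    have h0 : Tendsto (fun n : ℕ => ((n:ℝ) - x) ^ (α - 2)) atTop (nhds 0) := by
      have := (tendsto_rpow_neg_atTop (by linarith : (0:ℝ) < 2 - α)).comp hnx
      simpa [neg_sub, Function.comp_def] using this
    simpa using h0.const_mul (2 * α * (α - 1) * x ^ 2)
  have hev : ∀ᶠ n : ℕ in atTop, x + 1 ≤ (n:ℝ) :=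
    tendsto_natCast_atTop_atTop.eventually_ge_atTop (x + 1)
  apply tendsto_of_tendsto_of_tendsto_of_le_of_le' (tendsto_const_nhds (α := ℕ) (f := atTop)) hh
  · exact Eventually.of_forall fun n => key_nonneg hα1.le (Nat.cast_nonneg n) hx
  · filter_upwards [hev] with n hn
    set m := (n:ℝ) with hm
    have hxm : x < m := by linarith
    have e1 : |m - x| = m - x := abs_of_nonneg (by linarith)
    rw [e1]
    have h1 := key_upper hα1.le hx hxm
    have h2 := grad_upper (by linarith : (0:ℝ) ≤ α - 1) (by linarith : α - 1 ≤ 1)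
      (by linarith : (0:ℝ) < m - x) (by linarith : (0:ℝ) ≤ m + x)
    have hax : (0:ℝ) ≤ α * x := by nlinarith
    rw [show α - 1 - 1 = α - 2 by ring] at h2
    have h3 := mul_le_mul_of_nonneg_left (sub_le_iff_le_add.mpr h2) hax
    have : (m + x) - (m - x) = 2 * x := by ring
    nlinarith [h1, h3]

lemma two_rpow_bound {α : ℝ} (hα : 0 ≤ α) {x y : ℝ} (hx : 0 ≤ x) (hy : 0 ≤ y) :
    (x + y) ^ α ≤ 2 ^ α * (x ^ α + y ^ α) := by
  have h1 : x + y ≤ 2 * max x y := by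
    rcases le_total x y with h | h <;> simp [max_eq_right, max_eq_left, h] <;> linarith
  have h2 : (x + y) ^ α ≤ (2 * max x y) ^ α :=
    Real.rpow_le_rpow (by linarith) h1 hα
  have h3 : (2 * max x y) ^ α = 2 ^ α * (max x y) ^ α :=
    Real.mul_rpow (by norm_num) (le_max_of_le_left hx)
  have h4 : (max x y) ^ α ≤ x ^ α + y ^ α := by
    rcases le_total x y with h | h
    · rw [max_eq_right h]; nlinarith [Real.rpow_nonneg hx α]
    · rw [max_eq_left h]; nlinarith [Real.rpow_nonneg hy α]
  calc (x + y) ^ α ≤ 2 ^ α * (max x y) ^ α := by rw [← h3]; exact h2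
    _ ≤ 2 ^ α * (x ^ α + y ^ α) := by
        have : (0:ℝ) ≤ 2 ^ α := Real.rpow_nonneg (by norm_num) α
        nlinarith

theorem stmt2 (α : ℝ) (hα1 : 1 < α) (hα2 : α < 2) (b : ℤ → ℝ)
    (hbsym : ∀ n : ℤ, b (-n) = b n)
    (hbsum : Summable (fun j : ℕ => (j : ℝ) ^ α * |b j|)) :
    Summable b ∧
    (∀ n : ℤ, Summable (fun j : ℤ => |(j : ℝ)| ^ α * b (n - j))) ∧
    (∀ n : ℤ, (∑' j : ℤ, |(j : ℝ)| ^ α * b (-n - j)) = ∑' j : ℤ, |(j : ℝ)| ^ α * b (n - j)) ∧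
    Tendsto (fun n : ℕ =>
        (∑' j : ℤ, |(j : ℝ)| ^ α * b ((n : ℤ) - j)) - (∑' j : ℤ, b j) * (n : ℝ) ^ α)
      atTop (nhds 0) := by
  have hα0 : (0:ℝ) < α := by linarith
  -- L1 : weighted abs summable over ℤ
  have L1 : Summable (fun k : ℤ => |(k:ℝ)| ^ α * |b k|) := by
    refine Summable.of_nat_of_neg ?_ ?_
    · apply hbsum.congr
      intro n; push_cast
      rw [Nat.abs_cast]
    · apply hbsum.congr
      intro n; push_cast
      rw [abs_neg, Nat.abs_cast, hbsym]
  -- L2 : abs summable over ℤ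
  have L2 : Summable (fun k : ℤ => |b k|) := by
    have hnat : Summable (fun n : ℕ => |b (n:ℤ)|) := by
      have hshift : Summable (fun n : ℕ => (((n+1:ℕ)) : ℝ) ^ α * |b ((n+1:ℕ):ℤ)|) :=
        (summable_nat_add_iff 1).mpr hbsum
      have key : Summable (fun n : ℕ => |b ((n+1:ℕ):ℤ)|) := by
        apply Summable.of_nonneg_of_le (fun n => abs_nonneg _) _ hshift
        intro n
        have h1 : (1:ℝ) ≤ ((n + 1 : ℕ) : ℝ) ^ α :=
          Real.one_le_rpow (by push_cast; linarith) hα0.le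
        exact le_mul_of_one_le_left (abs_nonneg _) h1
      exact (summable_nat_add_iff 1).mp key
    refine Summable.of_nat_of_neg hnat ?_
    exact hnat.congr fun n => by rw [hbsym]
  have Sb : Summable b := L2.of_abs
  -- L4 : convolution summand, minus version
  have L4 : ∀ r : ℝ, Summable (fun k : ℤ => |r - (k:ℝ)| ^ α * b k) := by
    intro r
    apply Summable.of_norm_bounded
      (g := fun k : ℤ => 2 ^ α * |r| ^ α * |b k| + 2 ^ α * (|(k:ℝ)| ^ α * |b k|))
      (((L2.mul_left _)).add (L1.mul_left _))
    intro k
    rw [Real.norm_eq_abs, abs_mul, abs_of_nonneg (Real.rpow_nonneg (abs_nonneg _) α)]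
    have h1 : |r - (k:ℝ)| ≤ |r| + |(k:ℝ)| := abs_sub _ _
    have h2 : |r - (k:ℝ)| ^ α ≤ (|r| + |(k:ℝ)|) ^ α :=
      Real.rpow_le_rpow (abs_nonneg _) h1 hα0.le
    have h3 := two_rpow_bound hα0.le (abs_nonneg r) (abs_nonneg ((k:ℝ)))
    have hb : (0:ℝ) ≤ |b k| := abs_nonneg _
    nlinarith [mul_le_mul_of_nonneg_right (h2.trans h3) hb]
  -- L4p : plus version
  have L4p : ∀ r : ℝ, Summable (fun k : ℤ => |r + (k:ℝ)| ^ α * b k) := by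
    intro r
    refine (Equiv.summable_iff (Equiv.neg ℤ)).mp ?_
    apply (L4 r).congr
    intro k
    simp only [Function.comp, Equiv.neg_apply, Int.cast_neg, hbsym]
    rw [show r + -(k:ℝ) = r - k by ring]
  -- conj2
  have conj2 : ∀ n : ℤ, Summable (fun j : ℤ => |(j : ℝ)| ^ α * b (n - j)) := by
    intro n
    refine (Equiv.summable_iff (Equiv.subLeft n)).mp ?_
    apply (L4 (n:ℝ)).congr
    intro k
    simp only [Function.comp, Equiv.subLeft_apply, sub_sub_cancel]
    push_cast
    ring_nf
  -- tsum rewriting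
  have eqT : ∀ n : ℤ, (∑' j : ℤ, |(j : ℝ)| ^ α * b (n - j))
      = ∑' k : ℤ, |(n:ℝ) - (k:ℝ)| ^ α * b k := by
    intro n
    rw [← Equiv.tsum_eq (Equiv.subLeft n) (fun j : ℤ => |(j : ℝ)| ^ α * b (n - j))]
    apply tsum_congr
    intro k
    simp only [Equiv.subLeft_apply, sub_sub_cancel]
    push_cast
    ring_nf
  -- conj3
  have conj3 : ∀ n : ℤ, (∑' j : ℤ, |(j : ℝ)| ^ α * b (-n - j))
      = ∑' j : ℤ, |(j : ℝ)| ^ α * b (n - j) := by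
    intro n
    rw [← Equiv.tsum_eq (Equiv.neg ℤ) (fun j : ℤ => |(j : ℝ)| ^ α * b (-n - j))]
    apply tsum_congr
    intro j
    simp only [Equiv.neg_apply]
    rw [show -n - -j = -(n - j) by ring, hbsym]
    push_cast
    rw [abs_neg]
  refine ⟨Sb, conj2, conj3, ?_⟩
  -- the limit
  set S : ℝ := ∑' j : ℤ, b j with hS
  set C : ℝ := 1 + 2 ^ α + α * 2 ^ α with hC
  -- form identity for G
  have hGform : ∀ (m : ℝ) (k : ℤ), 0 ≤ m →
      |m - (k:ℝ)| ^ α + |m + (k:ℝ)| ^ α - 2 * m ^ α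
        = |m - (|(k:ℝ)|)| ^ α + (m + |(k:ℝ)|) ^ α - 2 * m ^ α := by
    intro m k hm
    rcases abs_cases ((k:ℝ)) with ⟨h1, h2⟩ | ⟨h1, h2⟩
    · rw [h1, abs_of_nonneg (by linarith : (0:ℝ) ≤ m + (k:ℝ))]
    · rw [h1]
      rw [show m - (k:ℝ) = m + -(k:ℝ) by ring, show m + (k:ℝ) = m - -(k:ℝ) by ring]
      rw [abs_of_nonneg (by linarith : (0:ℝ) ≤ m + -(k:ℝ))]
      ring
  -- dominated convergence
  have H : Tendsto (fun n : ℕ => ∑' k : ℤ,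
      ((|(n:ℝ) - (k:ℝ)| ^ α + |(n:ℝ) + (k:ℝ)| ^ α - 2 * (n:ℝ) ^ α) * b k))
      atTop (nhds 0) := by
    have := tendsto_tsum_of_dominated_convergence
      (𝓕 := (atTop : Filter ℕ))
      (f := fun (n : ℕ) (k : ℤ) =>
        (|(n:ℝ) - (k:ℝ)| ^ α + |(n:ℝ) + (k:ℝ)| ^ α - 2 * (n:ℝ) ^ α) * b k)
      (g := fun _ : ℤ => (0:ℝ))
      (bound := fun k : ℤ => C * (|(k:ℝ)| ^ α * |b k|))
      (L1.mul_left C) ?_ ?_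
    · simpa using this
    · intro k
      have hx : (0:ℝ) ≤ |(k:ℝ)| := abs_nonneg _
      have hk := (key_tendsto hα1 hα2 hx).mul_const (b k)
      rw [zero_mul] at hk
      apply hk.congr
      intro n
      beta_reduce
      rw [hGform (n:ℝ) k (Nat.cast_nonneg n)]
    · apply Eventually.of_forall
      intro n k
      rw [Real.norm_eq_abs, abs_mul, hGform (n:ℝ) k (Nat.cast_nonneg n)]
      have := key_bound hα1 hα2 (Nat.cast_nonneg n : (0:ℝ) ≤ (n:ℝ)) (abs_nonneg ((k:ℝ)))
      calc |(|(n:ℝ) - (|(k:ℝ)|)| ^ α + ((n:ℝ) + |(k:ℝ)|) ^ α - 2 * (n:ℝ) ^ α)| * |b k|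
          ≤ (C * |(k:ℝ)| ^ α) * |b k| :=
            mul_le_mul_of_nonneg_right this (abs_nonneg _)
        _ = C * (|(k:ℝ)| ^ α * |b k|) := by ring
  -- identity: T n - S * n^α = (∑' G·b) / 2
  have E : ∀ n : ℕ, (∑' j : ℤ, |(j : ℝ)| ^ α * b ((n:ℤ) - j)) - S * (n:ℝ) ^ α
      = (∑' k : ℤ, ((|(n:ℝ) - (k:ℝ)| ^ α + |(n:ℝ) + (k:ℝ)| ^ α - 2 * (n:ℝ) ^ α) * b k)) / 2 := by
    intro n
    set r : ℝ := (n:ℝ) with hr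
    have hcast : ∀ k : ℤ, |((n:ℤ):ℝ) - (k:ℝ)| = |r - (k:ℝ)| := by intro k; push_cast; rfl
    have h1 : Summable (fun k : ℤ => (|r - (k:ℝ)| ^ α - r ^ α) * b k) := by
      apply ((L4 r).sub (Sb.mul_left (r ^ α))).congr
      intro k; ring
    have h2 : Summable (fun k : ℤ => (|r + (k:ℝ)| ^ α - r ^ α) * b k) := by
      apply ((L4p r).sub (Sb.mul_left (r ^ α))).congr
      intro k; ring
    have a1 : (∑' j : ℤ, |(j : ℝ)| ^ α * b ((n:ℤ) - j)) - S * r ^ α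
        = ∑' k : ℤ, (|r - (k:ℝ)| ^ α - r ^ α) * b k := by
      rw [eqT (n:ℤ)]
      have hSr : S * r ^ α = ∑' k : ℤ, r ^ α * b k := by
        rw [tsum_mul_left, hS]; ring
      rw [hSr, ← Summable.tsum_sub (by apply (L4 r).congr; intro k; rw [hcast k]) (Sb.mul_left (r ^ α))]
      apply tsum_congr
      intro k
      rw [hcast k]; ring
    have a2 : (∑' k : ℤ, (|r - (k:ℝ)| ^ α - r ^ α) * b k)
        = ∑' k : ℤ, (|r + (k:ℝ)| ^ α - r ^ α) * b k := by
      rw [← Equiv.tsum_eq (Equiv.neg ℤ) (fun k : ℤ => (|r + (k:ℝ)| ^ α - r ^ α) * b k)]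
      apply tsum_congr
      intro k
      simp only [Equiv.neg_apply, Int.cast_neg, hbsym]
      rw [show r + -(k:ℝ) = r - k by ring]
    have a3 : (∑' k : ℤ, (|r - (k:ℝ)| ^ α - r ^ α) * b k)
        + (∑' k : ℤ, (|r + (k:ℝ)| ^ α - r ^ α) * b k)
        = ∑' k : ℤ, ((|r - (k:ℝ)| ^ α + |r + (k:ℝ)| ^ α - 2 * r ^ α) * b k) := by
      rw [← Summable.tsum_add h1 h2]
      apply tsum_congr
      intro k; ring
    rw [a1]
    rw [← a3, ← a2]
    ring
  have := H.div_const 2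
  rw [zero_div] at this
  apply this.congr
  intro n
  rw [← E n]
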